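/- Let f : ℝ → [0, ∞) be in L^p(ℝ) for some p > 1, continuous with compact support, and let M_R f(x) = sup_{b > x} (1/(b-x)) ∫_x^b f. Then (1/p) ‖M_R f‖_p^p = (1/(p-1)) ∫_ℝ f(x) (M_R f(x))^{p-1} dx. -/

import Mathlib

open MeasureTheory Set Filter Topology
open scoped ENNReal

/-- The one-sided (rising sun) maximal function
`M_R f(x) = sup_{b > x} (1/(b-x)) ∫_x^b f`. -/
noncomputable def risingSunMax (f : ℝ → ℝ) (x : ℝ) : ℝ :=
  ⨆ b : {b : ℝ // x < b}, (1 / ((b : ℝ) - x)) * ∫ t in x..(b : ℝ), f t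

section Aux

variable {f : ℝ → ℝ}

lemma rsm_bddAbove (hcont : Continuous f) (hsupp : HasCompactSupport f) (x : ℝ) :
    BddAbove (Set.range fun b : {b : ℝ // x < b} =>
      (1 / ((b : ℝ) - x)) * ∫ t in x..(b : ℝ), f t) := by
  obtain ⟨C, hC⟩ := hcont.bounded_above_of_compact_support hsupp
  refine ⟨C, ?_⟩
  rintro y ⟨⟨b, hb⟩, rfl⟩
  have hbx : (0:ℝ) < b - x := by simpa using hb
  have h1 : (∫ t in x..b, f t) ≤ ∫ t in x..b, C := by
    apply intervalIntegral.integral_mono_on hb.le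
      (hcont.intervalIntegrable _ _) intervalIntegrable_const
    intro u _
    exact (le_abs_self _).trans (hC u)
  have h2 : (∫ t in x..b, C) = C * (b - x) := by simp [mul_comm]
  calc (1 / (b - x)) * ∫ t in x..b, f t ≤ (1 / (b - x)) * (C * (b - x)) := by
        apply mul_le_mul_of_nonneg_left (h1.trans h2.le) (by positivity)
    _ = C := by field_simp

lemma rsm_nonneg (hcont : Continuous f) (hpos : ∀ x, 0 ≤ f x) (x : ℝ) :
    0 ≤ risingSunMax f x := by
  have : Nonempty {b : ℝ // x < b} := ⟨⟨x + 1, by linarith⟩⟩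
  apply Real.iSup_nonneg
  rintro ⟨b, hb⟩
  simp only []
  have hbx : (0:ℝ) < b - x := by simpa using hb
  have h : (0:ℝ) ≤ ∫ u in x..b, f u :=
    intervalIntegral.integral_nonneg hb.le (fun u _ => hpos u)
  positivity

lemma rsm_lt_iff (hcont : Continuous f) (hpos : ∀ x, 0 ≤ f x)
    (hsupp : HasCompactSupport f) (x t : ℝ) :
    t < risingSunMax f x ↔ ∃ b, x < b ∧ t * (b - x) < ∫ u in x..b, f u := by
  have hne : Nonempty {b : ℝ // x < b} := ⟨⟨x + 1, by linarith⟩⟩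
  constructor
  · intro h
    by_contra hcon
    push_neg at hcon
    have : risingSunMax f x ≤ t := by
      apply ciSup_le
      rintro ⟨b, hb⟩
      have hbx : (0:ℝ) < b - x := by simpa using hb
      have h1 := hcon b hb
      rw [one_div, inv_mul_le_iff₀ hbx] -- maybe name differs
      linarith [h1]
    linarith
  · rintro ⟨b, hb, hlt⟩
    have hbx : (0:ℝ) < b - x := by simpa using hb
    have h1 : t < (1 / (b - x)) * ∫ u in x..b, f u := by
      rw [one_div, lt_inv_mul_iff₀ hbx]
      linarith
    exact h1.trans_le (le_ciSup (rsm_bddAbove hcont hsupp x) ⟨b, hb⟩)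

lemma rsm_isOpen (hcont : Continuous f) (hpos : ∀ x, 0 ≤ f x)
    (hsupp : HasCompactSupport f) (t : ℝ) :
    IsOpen {x | t < risingSunMax f x} := by
  have hFi : ∀ a b : ℝ, IntervalIntegrable f volume a b :=
    fun a b => hcont.intervalIntegrable a b
  set F : ℝ → ℝ := fun y => ∫ u in (0:ℝ)..y, f u with hF
  have hFc : Continuous F := intervalIntegral.continuous_primitive hFi 0
  have hsub : ∀ a b : ℝ, (∫ u in a..b, f u) = F b - F a := fun a b =>
    (intervalIntegral.integral_interval_sub_left (hFi 0 b) (hFi 0 a)).symm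
  rw [isOpen_iff_mem_nhds]
  intro x hx
  rw [mem_setOf_eq, rsm_lt_iff hcont hpos hsupp] at hx
  obtain ⟨b, hb, hlt⟩ := hx
  rw [hsub] at hlt
  have hG : Continuous fun y => F y - t * y :=
    hFc.sub (continuous_const.mul continuous_id)
  have hopen : IsOpen {y | y < b ∧ F y - t * y < F b - t * b} := by
    have : {y | y < b ∧ F y - t * y < F b - t * b}
        = Iio b ∩ {y | F y - t * y < F b - t * b} := rfl
    rw [this]
    exact isOpen_Iio.inter (isOpen_lt hG continuous_const)
  apply Filter.mem_of_superset (hopen.mem_nhds ⟨hb, by linarith⟩)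
  intro y hy
  rw [mem_setOf_eq, rsm_lt_iff hcont hpos hsupp]
  exact ⟨b, hy.1, by rw [hsub]; linarith [hy.2]⟩

lemma rsm_measurable (hcont : Continuous f) (hpos : ∀ x, 0 ≤ f x)
    (hsupp : HasCompactSupport f) : Measurable (risingSunMax f) :=
  measurable_of_Ioi fun t => (rsm_isOpen hcont hpos hsupp t).measurableSet

lemma risingSun_measure (hcont : Continuous f) (hpos : ∀ x, 0 ≤ f x)
    (hsupp : HasCompactSupport f) {t : ℝ} (ht : 0 < t) :
    ∫⁻ x in {x | t < risingSunMax f x}, ENNReal.ofReal (f x)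
      = ENNReal.ofReal t * volume {x | t < risingSunMax f x} := by
  have hFi : ∀ a b : ℝ, IntervalIntegrable f volume a b :=
    fun a b => hcont.intervalIntegrable a b
  have hInt : Integrable f := hcont.integrable_of_hasCompactSupport hsupp
  set F : ℝ → ℝ := fun y => ∫ u in (0:ℝ)..y, f u with hF
  have hFc : Continuous F := intervalIntegral.continuous_primitive hFi 0
  have hsub : ∀ a b : ℝ, (∫ u in a..b, f u) = F b - F a := fun a b =>
    (intervalIntegral.integral_interval_sub_left (hFi 0 b) (hFi 0 a)).symm
  set G : ℝ → ℝ := fun y => F y - t * y with hGdef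
  have hGc : Continuous G := hFc.sub (continuous_const.mul continuous_id)
  set E := {x | t < risingSunMax f x} with hE
  have hEopen : IsOpen E := rsm_isOpen hcont hpos hsupp t
  have hmem : ∀ x, x ∈ E ↔ ∃ b, x < b ∧ G x < G b := by
    intro x
    rw [hE, mem_setOf_eq, rsm_lt_iff hcont hpos hsupp]
    constructor
    · rintro ⟨b, hb, hlt⟩
      rw [hsub] at hlt
      exact ⟨b, hb, by simp only [hGdef]; linarith⟩
    · rintro ⟨b, hb, hlt⟩
      simp only [hGdef] at hlt
      exact ⟨b, hb, by rw [hsub]; linarith⟩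
  -- boundedness of E
  obtain ⟨A, hA0, hA⟩ : ∃ A : ℝ, 0 ≤ A ∧ tsupport f ⊆ Icc (-A) A := by
    obtain ⟨r, hr⟩ := hsupp.isBounded.subset_closedBall 0
    refine ⟨max r 0, le_max_right _ _, ?_⟩
    intro u hu
    have := hr hu
    rw [Metric.mem_closedBall, Real.dist_eq, sub_zero] at this
    have h1 : |u| ≤ max r 0 := this.trans (le_max_left _ _)
    rw [abs_le] at h1
    exact ⟨h1.1, h1.2⟩
  set B : ℝ := A + 1 with hB
  have hfz : ∀ u : ℝ, A < |u| → f u = 0 := by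
    intro u hu
    apply image_eq_zero_of_notMem_tsupport
    intro hmem'
    have h := hA hmem'
    rw [mem_Icc] at h
    rcases lt_abs.1 hu with h' | h' <;> linarith
  have hfz' : ∀ u : ℝ, A < |u| → f u = 0 := hfz
  set I : ℝ := ∫ u, f u with hI
  have hInn : 0 ≤ I := integral_nonneg hpos
  set lo : ℝ := -B - I / t with hlo
  have hzero_right : ∀ a b : ℝ, B ≤ a → a < b → (∫ u in a..b, f u) = 0 := by
    intro a b hBa hab
    rw [← intervalIntegral.integral_zero (a := a) (b := b) (μ := volume)]
    apply intervalIntegral.integral_congr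
    intro u hu
    rw [uIcc_of_le hab.le] at hu
    exact hfz u (by rw [abs_of_nonneg (by linarith [hu.1] : (0:ℝ) ≤ u)]; linarith [hu.1])
  have hzero_left : ∀ a b : ℝ, a < b → b ≤ -B → (∫ u in a..b, f u) = 0 := by
    intro a b hab hbB
    rw [← intervalIntegral.integral_zero (a := a) (b := b) (μ := volume)]
    apply intervalIntegral.integral_congr
    intro u hu
    rw [uIcc_of_le hab.le] at hu
    exact hfz u (by rw [abs_of_nonpos (by linarith [hu.2] : u ≤ 0)]; linarith [hu.2])
  have hEsub : E ⊆ Ioo lo B := by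
    intro x hx
    obtain ⟨b, hb, hlt⟩ := (rsm_lt_iff hcont hpos hsupp x t).1 hx
    have htbx : 0 < t * (b - x) := by
      have : 0 < b - x := by linarith
      positivity
    constructor
    · by_contra h
      push_neg at h
      have hIb : (∫ u in x..b, f u) ≤ I := by
        rw [intervalIntegral.integral_of_le hb.le]
        exact setIntegral_le_integral hInt (Eventually.of_forall hpos)
      have hbpos : -B < b := by
        by_contra hbB
        push_neg at hbB
        have := hzero_left x b hb hbB
        linarith
      have h2 : I / t < b - x := by
        rw [hlo] at h
        linarith
      rw [div_lt_iff₀ ht] at h2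
      linarith [mul_comm t (b - x)]
    · by_contra h
      push_neg at h
      have := hzero_right x b h hb
      linarith
  -- components
  have hcomp : ∀ x ∈ E, ∃ a b : ℝ, a < b ∧ connectedComponentIn E x = Ioo a b ∧
      (∫ u in a..b, f u) = t * (b - a) := by
    intro x hx
    set S := connectedComponentIn E x with hS
    have hSopen : IsOpen S := hEopen.connectedComponentIn
    have hxS : x ∈ S := mem_connectedComponentIn hx
    have hSE : S ⊆ E := connectedComponentIn_subset E x
    have hSne : S.Nonempty := ⟨x, hxS⟩
    have hbddA : BddAbove S := ⟨B, fun y hy => (hEsub (hSE hy)).2.le⟩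
    have hbddB : BddBelow S := ⟨lo, fun y hy => (hEsub (hSE hy)).1.le⟩
    set a := sInf S with ha
    set b := sSup S with hb
    have hoc : OrdConnected S := isPreconnected_connectedComponentIn.ordConnected
    have hSIoo : S = Ioo a b := by
      apply Subset.antisymm
      · intro z hz
        obtain ⟨ε, hε, hball⟩ := Metric.isOpen_iff.1 hSopen z hz
        have hballIoo : Ioo (z - ε) (z + ε) ⊆ S := by
          rw [← Real.ball_eq_Ioo]; exact hball
        constructor
        · have hin : z - ε / 2 ∈ S := hballIoo ⟨by linarith, by linarith⟩
          exact lt_of_le_of_lt (csInf_le hbddB hin) (by linarith)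
        · have hin : z + ε / 2 ∈ S := hballIoo ⟨by linarith, by linarith⟩
          exact lt_of_lt_of_le (by linarith) (le_csSup hbddA hin)
      · intro z hz
        obtain ⟨u, huS, hu⟩ := exists_lt_of_csInf_lt hSne hz.1
        obtain ⟨v, hvS, hv⟩ := exists_lt_of_lt_csSup hSne hz.2
        exact hoc.out huS hvS ⟨hu.le, hv.le⟩
    have hab : a < b := by
      have h := hxS
      rw [hSIoo] at h
      exact h.1.trans h.2
    have hbE : b ∉ E := by
      intro hbE
      obtain ⟨ε, hε, hball⟩ := Metric.isOpen_iff.1 hEopen b hbE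
      have hballcomp : Metric.ball b ε ⊆ connectedComponentIn E b := by
        apply IsPreconnected.subset_connectedComponentIn _ (Metric.mem_ball_self hε) hball
        rw [Real.ball_eq_Ioo]
        exact isPreconnected_Ioo
      obtain ⟨w, hwS, hw⟩ := exists_lt_of_lt_csSup hSne (show b - ε < b by linarith)
      have hwb : w < b := by
        have h := hwS; rw [hSIoo] at h; exact h.2
      have hwball : w ∈ Metric.ball b ε := by
        rw [Real.ball_eq_Ioo]; exact ⟨hw, by linarith⟩
      have h1 : connectedComponentIn E w = connectedComponentIn E b :=
        (connectedComponentIn_eq (hballcomp hwball)).symm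
      have h2 : connectedComponentIn E w = S := (connectedComponentIn_eq hwS).symm
      have hbS : b ∈ S := by
        rw [← h2, h1]
        exact mem_connectedComponentIn hbE
      rw [hSIoo] at hbS
      exact lt_irrefl b hbS.2
    have haE : a ∉ E := by
      intro haE
      obtain ⟨ε, hε, hball⟩ := Metric.isOpen_iff.1 hEopen a haE
      have hballcomp : Metric.ball a ε ⊆ connectedComponentIn E a := by
        apply IsPreconnected.subset_connectedComponentIn _ (Metric.mem_ball_self hε) hball
        rw [Real.ball_eq_Ioo]
        exact isPreconnected_Ioo
      obtain ⟨w, hwS, hw⟩ := exists_lt_of_csInf_lt hSne (show a < a + ε by linarith)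
      have hwa : a < w := by
        have h := hwS; rw [hSIoo] at h; exact h.1
      have hwball : w ∈ Metric.ball a ε := by
        rw [Real.ball_eq_Ioo]; exact ⟨by linarith, hw⟩
      have h1 : connectedComponentIn E w = connectedComponentIn E a :=
        (connectedComponentIn_eq (hballcomp hwball)).symm
      have h2 : connectedComponentIn E w = S := (connectedComponentIn_eq hwS).symm
      have haS : a ∈ S := by
        rw [← h2, h1]
        exact mem_connectedComponentIn haE
      rw [hSIoo] at haS
      exact lt_irrefl a haS.1
    have hkey : ∀ z ∈ Ioo a b, G z ≤ G b := by
      intro z hz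
      by_contra hcon
      push_neg at hcon
      set K := {y | y ∈ Icc z b ∧ G z ≤ G y} with hK
      have hKne : K.Nonempty := ⟨z, ⟨le_refl z, hz.2.le⟩, le_refl _⟩
      have hKc : IsClosed K :=
        (isClosed_Icc.preimage continuous_id).inter (isClosed_le continuous_const hGc)
      have hKbdd : BddAbove K := ⟨b, fun y hy => hy.1.2⟩
      set w := sSup K with hw
      have hwK : w ∈ K := hKc.csSup_mem hKne hKbdd
      have hwb : w < b := by
        rcases lt_or_eq_of_le hwK.1.2 with h | h
        · exact h
        · exfalso; rw [h] at hwK; linarith [hwK.2]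
      have hwE : w ∈ E := by
        apply hSE
        rw [hSIoo]
        exact ⟨lt_of_lt_of_le hz.1 hwK.1.1, hwb⟩
      obtain ⟨y, hy, hGy⟩ := (hmem w).1 hwE
      rcases le_or_gt y b with hyb | hyb
      · have hyK : y ∈ K := ⟨⟨hwK.1.1.trans hy.le, hyb⟩, hwK.2.trans hGy.le⟩
        exact absurd (le_csSup hKbdd hyK) (not_le.2 hy)
      · exact hbE ((hmem b).2 ⟨y, hyb, by linarith [hwK.2]⟩)
    have hGab : G a = G b := by
      have h1 : G a ≤ G b := by
        have htend : Tendsto G (nhdsWithin a (Ioi a)) (nhds (G a)) :=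
          (hGc.tendsto a).mono_left nhdsWithin_le_nhds
        apply le_of_tendsto htend
        filter_upwards [Ioo_mem_nhdsGT_of_mem (left_mem_Ico.2 hab)] with z hz
        exact hkey z hz
      have h2 : G b ≤ G a := by
        by_contra hcon2
        push_neg at hcon2
        exact haE ((hmem a).2 ⟨b, hab, hcon2⟩)
      linarith
    refine ⟨a, b, hab, hSIoo, ?_⟩
    rw [hsub a b]
    simp only [hGdef] at hGab
    have h3 : F b - F a = t * b - t * a := by linarith
    rw [h3]; ring
  -- assemble
  set C : Set (Set ℝ) := (fun x => connectedComponentIn E x) '' E with hC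
  have hCcount : C.Countable := by
    apply Countable.mono ?_ (countable_range fun q : ℚ => connectedComponentIn E (q : ℝ))
    rintro S ⟨x, hx, rfl⟩
    obtain ⟨a, b, hab, hxeq, -⟩ := hcomp x hx
    obtain ⟨q, hq1, hq2⟩ := exists_rat_btwn hab
    have hqS : (q : ℝ) ∈ connectedComponentIn E x := by
      rw [hxeq]; exact ⟨hq1, hq2⟩
    exact ⟨q, (connectedComponentIn_eq hqS).symm⟩
  haveI := hCcount.to_subtype
  have hCopen : ∀ S : C, IsOpen (S : Set ℝ) := by
    rintro ⟨S, x, hx, rfl⟩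
    exact hEopen.connectedComponentIn
  have hdisj' : Pairwise (Function.onFun Disjoint fun S : C => (S : Set ℝ)) := by
    rintro ⟨S₁, x, hx, rfl⟩ ⟨S₂, y, hy, rfl⟩ hij
    rw [Function.onFun]
    rw [Set.disjoint_left]
    intro z hz1 hz2
    exact hij (Subtype.ext ((connectedComponentIn_eq hz1).trans
      (connectedComponentIn_eq hz2).symm))
  have hCU : ⋃ S : C, (S : Set ℝ) = E := by
    rw [← sUnion_eq_iUnion]
    apply Subset.antisymm
    · rintro z ⟨S, ⟨x, hx, rfl⟩, hzS⟩
      exact connectedComponentIn_subset E x hzS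
    · intro z hz
      exact ⟨_, ⟨z, hz, rfl⟩, mem_connectedComponentIn hz⟩
  rw [← hCU,
    lintegral_iUnion (fun S => (hCopen S).measurableSet) hdisj',
    measure_iUnion hdisj' (fun S => (hCopen S).measurableSet), ← ENNReal.tsum_mul_left]
  apply tsum_congr
  rintro ⟨S, hS⟩
  obtain ⟨x, hx, rfl⟩ := hS
  obtain ⟨a, b, hab, heq, hint⟩ := hcomp x hx
  simp only [heq]
  rw [Real.volume_Ioo]
  have h1 : ∫⁻ u in Ioo a b, ENNReal.ofReal (f u) = ENNReal.ofReal (∫ u in Ioo a b, f u) :=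
    (ofReal_integral_eq_lintegral_ofReal hInt.integrableOn (Eventually.of_forall hpos)).symm
  rw [h1]
  have h2 : (∫ u in Ioo a b, f u) = ∫ u in a..b, f u := by
    rw [intervalIntegral.integral_of_le hab.le, integral_Ioc_eq_integral_Ioo]
  rw [h2, hint, ← ENNReal.ofReal_mul ht.le]

lemma rsm_J {p : ℝ} (hp : 1 < p) {s : ℝ} (hs : 0 ≤ s) :
    ∫⁻ u in Ioo 0 s, ENNReal.ofReal (u ^ (p - 2)) = ENNReal.ofReal (s ^ (p - 1) / (p - 1)) := by
  rcases eq_or_lt_of_le hs with h0 | h0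
  · rw [← h0]
    simp [Real.zero_rpow (ne_of_gt (by linarith : (0:ℝ) < p - 1))]
  · have hint : IntegrableOn (fun u : ℝ => u ^ (p - 2)) (Ioo 0 s) := by
      have h := intervalIntegral.intervalIntegrable_rpow'
        (show (-1:ℝ) < p - 2 by linarith) (a := 0) (b := s)
      rw [intervalIntegrable_iff, uIoc_of_le hs] at h
      exact h.mono_set Ioo_subset_Ioc_self
    have hnn : 0 ≤ᵐ[volume.restrict (Ioo 0 s)] fun u : ℝ => u ^ (p - 2) := by
      filter_upwards [ae_restrict_mem measurableSet_Ioo] with u hu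
      exact Real.rpow_nonneg hu.1.le _
    rw [← ofReal_integral_eq_lintegral_ofReal hint hnn]
    congr 1
    rw [← integral_Ioc_eq_integral_Ioo]
    rw [← intervalIntegral.integral_of_le hs]
    rw [integral_rpow (Or.inl (by linarith : (-1:ℝ) < p - 2))]
    rw [show p - 2 + 1 = p - 1 by ring]
    rw [Real.zero_rpow (ne_of_gt (by linarith : (0:ℝ) < p - 1)), sub_zero]

end Aux

/-- For continuous, compactly supported `f ≥ 0` in `L^p(ℝ)`, `p > 1`:
`(1/p) ‖M_R f‖_p^p = (1/(p-1)) ∫ f (M_R f)^{p-1}`. -/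
theorem stmt_5 (p : ℝ) (hp : 1 < p) (f : ℝ → ℝ) (hcont : Continuous f)
    (hpos : ∀ x, 0 ≤ f x) (hsupp : HasCompactSupport f)
    (hLp : MemLp f (ENNReal.ofReal p)) :
    (1 / p) * ∫ x, (risingSunMax f x) ^ p
      = (1 / (p - 1)) * ∫ x, f x * (risingSunMax f x) ^ (p - 1) := by
  set M := risingSunMax f with hM
  have hMm : Measurable M :=
    measurable_of_Ioi fun t => (rsm_isOpen hcont hpos hsupp t).measurableSet
  have hMnn : ∀ x, 0 ≤ M x := fun x => rsm_nonneg hcont hpos x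
  have hp0 : (0:ℝ) < p := by linarith
  have hp1 : (0:ℝ) < p - 1 := by linarith
  set L1 : ℝ≥0∞ := ∫⁻ x, ENNReal.ofReal (M x ^ p) with hL1
  set L2 : ℝ≥0∞ := ∫⁻ x, ENNReal.ofReal (f x * M x ^ (p - 1)) with hL2
  -- layer cake
  have key := lintegral_comp_eq_lintegral_meas_lt_mul (volume : Measure ℝ)
    (f := M) (g := fun s => s ^ (p - 1)) (Eventually.of_forall hMnn) hMm.aemeasurable
    (fun s _ => intervalIntegral.intervalIntegrable_rpow' (by linarith))
    (by filter_upwards [ae_restrict_mem measurableSet_Ioi] with s hs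
        exact Real.rpow_nonneg (le_of_lt hs) _)
  -- LHS of key
  have hLHS : (∫⁻ ω, ENNReal.ofReal (∫ s in (0:ℝ)..M ω, s ^ (p - 1)))
      = L1 * ENNReal.ofReal p⁻¹ := by
    rw [hL1, ← lintegral_mul_const' (ENNReal.ofReal p⁻¹) _ ENNReal.ofReal_ne_top]
    apply lintegral_congr
    intro ω
    rw [integral_rpow (Or.inl (by linarith : (-1:ℝ) < p - 1)),
      show p - 1 + 1 = p by ring, Real.zero_rpow (ne_of_gt hp0), sub_zero, div_eq_mul_inv,
      ENNReal.ofReal_mul (Real.rpow_nonneg (hMnn ω) _)]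
  rw [hLHS] at key
  -- RHS of key : rewrite using rising sun measure identity
  set S : Set (ℝ × ℝ) := {q : ℝ × ℝ | q.1 < M q.2} with hS
  have hSm : MeasurableSet S := measurableSet_lt measurable_fst (hMm.comp measurable_snd)
  set Φ : ℝ → ℝ → ℝ≥0∞ := fun t x =>
    ENNReal.ofReal (t ^ (p - 2)) *
      (ENNReal.ofReal (f x) * S.indicator (fun _ => (1:ℝ≥0∞)) (t, x)) with hΦ
  have hΦm : Measurable fun q : ℝ × ℝ => Φ q.1 q.2 := by
    apply Measurable.mul
    · exact (measurable_fst.pow measurable_const).ennreal_ofReal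
    · apply Measurable.mul
      · exact (hcont.measurable.comp measurable_snd).ennreal_ofReal
      · exact (measurable_const.indicator hSm)
  have hRHS : (∫⁻ t in Ioi 0, volume {a | t < M a} * ENNReal.ofReal (t ^ (p - 1)))
      = ∫⁻ t in Ioi 0, ∫⁻ x, Φ t x := by
    apply lintegral_congr_ae
    filter_upwards [ae_restrict_mem measurableSet_Ioi] with t ht
    have hrs := risingSun_measure hcont hpos hsupp ht
    have h1 : ENNReal.ofReal (t ^ (p - 1)) * volume {a | t < M a}
        = ENNReal.ofReal (t ^ (p - 2)) * ∫⁻ x in {a | t < M a}, ENNReal.ofReal (f x) := by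
      rw [hrs, ← mul_assoc, ← ENNReal.ofReal_mul (Real.rpow_nonneg ht.le _)]
      congr 2
      rw [show p - 1 = p - 2 + 1 by ring, Real.rpow_add ht, Real.rpow_one]
    rw [mul_comm, h1]
    rw [← lintegral_indicator (rsm_isOpen hcont hpos hsupp t).measurableSet,
      ← lintegral_const_mul' _ _ ENNReal.ofReal_ne_top]
    apply lintegral_congr
    intro x
    by_cases hx : t < M x
    · simp only [hΦ, Set.indicator_apply]
      have hx1 : x ∈ {a | t < M a} := hx
      have hx2 : (t, x) ∈ S := hx
      simp [hx1, hx2]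
      exact fun h => absurd hx (not_lt.2 h)
    · simp only [hΦ, Set.indicator_apply]
      have hx1 : x ∉ {a | t < M a} := hx
      have hx2 : (t, x) ∉ S := hx
      simp [hx1, hx2]
      exact fun h => absurd h hx
  rw [hRHS] at key
  -- swap
  have hswap : (∫⁻ t in Ioi 0, ∫⁻ x, Φ t x) = ∫⁻ x, ∫⁻ t in Ioi 0, Φ t x := by
    exact lintegral_lintegral_swap (hΦm.aemeasurable)
  rw [hswap] at key
  -- inner integral
  have hinner : ∀ x : ℝ, (∫⁻ t in Ioi 0, Φ t x)
      = ENNReal.ofReal (f x * M x ^ (p - 1)) * ENNReal.ofReal (p - 1)⁻¹ := by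
    intro x
    have hind : ∀ t : ℝ, Φ t x = (Iio (M x)).indicator
        (fun t => ENNReal.ofReal (t ^ (p - 2)) * ENNReal.ofReal (f x)) t := by
      intro t
      by_cases hx : t < M x
      · have hx2 : (t, x) ∈ S := hx
        simp [hΦ, Set.indicator_apply, hx, hx2]
      · have hx2 : (t, x) ∉ S := hx
        simp [hΦ, Set.indicator_apply, hx, hx2]
    simp_rw [hind]
    rw [lintegral_indicator measurableSet_Iio, Measure.restrict_restrict measurableSet_Iio,
      Set.Iio_inter_Ioi, lintegral_mul_const' _ _ ENNReal.ofReal_ne_top,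
      rsm_J hp (hMnn x), div_eq_mul_inv,
      ENNReal.ofReal_mul (Real.rpow_nonneg (hMnn x) _), ENNReal.ofReal_mul (hpos x),
      mul_comm (ENNReal.ofReal (M x ^ (p-1))) (ENNReal.ofReal (p-1)⁻¹)]
    ring
  simp_rw [hinner] at key
  rw [lintegral_mul_const' _ _ ENNReal.ofReal_ne_top, ← hL2] at key
  -- key : L1 * ofReal p⁻¹ = L2 * ofReal (p-1)⁻¹
  have hI1 : ∫ x, M x ^ p = L1.toReal := by
    rw [hL1]
    exact integral_eq_lintegral_of_nonneg_ae
      (Eventually.of_forall fun x => Real.rpow_nonneg (hMnn x) p)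
      ((hMm.pow measurable_const).aestronglyMeasurable)
  have hI2 : ∫ x, f x * M x ^ (p - 1) = L2.toReal := by
    rw [hL2]
    exact integral_eq_lintegral_of_nonneg_ae
      (Eventually.of_forall fun x => mul_nonneg (hpos x) (Real.rpow_nonneg (hMnn x) _))
      ((hcont.measurable.mul (hMm.pow measurable_const)).aestronglyMeasurable)
  rw [hI1, hI2]
  by_cases hL2top : L2 = ⊤
  · have hL1top : L1 = ⊤ := by
      by_contra hL1top
      have : L1 * ENNReal.ofReal p⁻¹ ≠ ⊤ :=
        ENNReal.mul_ne_top hL1top ENNReal.ofReal_ne_top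
      rw [key, hL2top] at this
      apply this
      rw [ENNReal.top_mul (ENNReal.ofReal_pos.2 (inv_pos.2 hp1)).ne']
    rw [hL1top, hL2top]
    simp
  · have hL1top : L1 ≠ ⊤ := by
      intro h
      rw [h] at key
      rw [ENNReal.top_mul (ENNReal.ofReal_pos.2 (inv_pos.2 hp0)).ne'] at key
      exact (ENNReal.mul_ne_top hL2top ENNReal.ofReal_ne_top) key.symm
    have := congrArg ENNReal.toReal key
    rw [ENNReal.toReal_mul, ENNReal.toReal_mul, ENNReal.toReal_ofReal (by positivity),
      ENNReal.toReal_ofReal (by positivity)] at this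
    rw [one_div, one_div]
    rw [mul_comm, mul_comm (p - 1)⁻¹]
    exact this
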